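/- The transposition sequence F: there is a word of length 68 in S whose composite is the transposition Equiv.swap 0 1 (swapping the two adjacent back-row positions 0 and 1 of quadrant A and fixing all other positions); in particular Equiv.swap 0 1 ∈ Submonoid.closure S. -/
import Mathlib


namespace Volleyball

/-- Rotation of quadrant A: the 6-cycle (0 1 2 8 7 6). -/
def rA : Equiv.Perm (Fin 24) := ([0,1,2,8,7,6] : List (Fin 24)).formPerm
/-- Rotation of quadrant B: the 6-cycle (3 4 5 11 10 9). -/
def rB : Equiv.Perm (Fin 24) := ([3,4,5,11,10,9] : List (Fin 24)).formPerm
/-- Rotation of quadrant C: the 6-cycle (12 13 14 20 19 18). -/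
def rC : Equiv.Perm (Fin 24) := ([12,13,14,20,19,18] : List (Fin 24)).formPerm
/-- Rotation of quadrant D: the 6-cycle (15 16 17 23 22 21). -/
def rD : Equiv.Perm (Fin 24) := ([15,16,17,23,22,21] : List (Fin 24)).formPerm

/-- The migration E = (6 9 17 14)(7 10 16 13)(8 11 15 12). -/
def E : Equiv.Perm (Fin 24) :=
  ([6,9,17,14] : List (Fin 24)).formPerm *
  ([7,10,16,13] : List (Fin 24)).formPerm *
  ([8,11,15,12] : List (Fin 24)).formPerm

/-- The step set of the volleyball chain. -/
def S : Set (Equiv.Perm (Fin 24)) :=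
  { g | ∃ x₁ x₂ x₃ x₄ : Fin 6,
      (((x₁ : ℕ) : ZMod 6) - ((x₂ : ℕ) : ZMod 6) = -1 ∨
       ((x₁ : ℕ) : ZMod 6) - ((x₂ : ℕ) : ZMod 6) = 0 ∨
       ((x₁ : ℕ) : ZMod 6) - ((x₂ : ℕ) : ZMod 6) = 1) ∧
      (((x₃ : ℕ) : ZMod 6) - ((x₄ : ℕ) : ZMod 6) = -1 ∨
       ((x₃ : ℕ) : ZMod 6) - ((x₄ : ℕ) : ZMod 6) = 0 ∨
       ((x₃ : ℕ) : ZMod 6) - ((x₄ : ℕ) : ZMod 6) = 1) ∧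
      g = E * rA ^ (x₁ : ℕ) * rC ^ (x₂ : ℕ) * rB ^ (x₃ : ℕ) * rD ^ (x₄ : ℕ) }
def e1 : Equiv.Perm (Fin 24) := E * rA ^ ((1 : Fin 6) : ℕ) * rC ^ ((0 : Fin 6) : ℕ) * rB ^ ((5 : Fin 6) : ℕ) * rD ^ ((4 : Fin 6) : ℕ)
def e2 : Equiv.Perm (Fin 24) := E * rA ^ ((1 : Fin 6) : ℕ) * rC ^ ((0 : Fin 6) : ℕ) * rB ^ ((0 : Fin 6) : ℕ) * rD ^ ((0 : Fin 6) : ℕ)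
def e3 : Equiv.Perm (Fin 24) := E * rA ^ ((0 : Fin 6) : ℕ) * rC ^ ((0 : Fin 6) : ℕ) * rB ^ ((1 : Fin 6) : ℕ) * rD ^ ((2 : Fin 6) : ℕ)
def e4 : Equiv.Perm (Fin 24) := E * rA ^ ((1 : Fin 6) : ℕ) * rC ^ ((0 : Fin 6) : ℕ) * rB ^ ((3 : Fin 6) : ℕ) * rD ^ ((2 : Fin 6) : ℕ)
def e5 : Equiv.Perm (Fin 24) := E * rA ^ ((4 : Fin 6) : ℕ) * rC ^ ((3 : Fin 6) : ℕ) * rB ^ ((1 : Fin 6) : ℕ) * rD ^ ((2 : Fin 6) : ℕ)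
def e6 : Equiv.Perm (Fin 24) := E * rA ^ ((0 : Fin 6) : ℕ) * rC ^ ((5 : Fin 6) : ℕ) * rB ^ ((3 : Fin 6) : ℕ) * rD ^ ((3 : Fin 6) : ℕ)
def e7 : Equiv.Perm (Fin 24) := E * rA ^ ((2 : Fin 6) : ℕ) * rC ^ ((3 : Fin 6) : ℕ) * rB ^ ((0 : Fin 6) : ℕ) * rD ^ ((5 : Fin 6) : ℕ)
def e8 : Equiv.Perm (Fin 24) := E * rA ^ ((5 : Fin 6) : ℕ) * rC ^ ((4 : Fin 6) : ℕ) * rB ^ ((3 : Fin 6) : ℕ) * rD ^ ((2 : Fin 6) : ℕ)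
def e9 : Equiv.Perm (Fin 24) := E * rA ^ ((3 : Fin 6) : ℕ) * rC ^ ((3 : Fin 6) : ℕ) * rB ^ ((0 : Fin 6) : ℕ) * rD ^ ((1 : Fin 6) : ℕ)
def e10 : Equiv.Perm (Fin 24) := E * rA ^ ((5 : Fin 6) : ℕ) * rC ^ ((0 : Fin 6) : ℕ) * rB ^ ((1 : Fin 6) : ℕ) * rD ^ ((2 : Fin 6) : ℕ)
def e11 : Equiv.Perm (Fin 24) := E * rA ^ ((4 : Fin 6) : ℕ) * rC ^ ((4 : Fin 6) : ℕ) * rB ^ ((5 : Fin 6) : ℕ) * rD ^ ((0 : Fin 6) : ℕ)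
def e12 : Equiv.Perm (Fin 24) := E * rA ^ ((0 : Fin 6) : ℕ) * rC ^ ((0 : Fin 6) : ℕ) * rB ^ ((3 : Fin 6) : ℕ) * rD ^ ((3 : Fin 6) : ℕ)
def eE : Equiv.Perm (Fin 24) := E * rA ^ ((0 : Fin 6) : ℕ) * rC ^ ((0 : Fin 6) : ℕ) * rB ^ ((0 : Fin 6) : ℕ) * rD ^ ((0 : Fin 6) : ℕ)
def c2 : Equiv.Perm (Fin 24) := (([0, 2, 15, 22, 6, 1, 11, 5, 4, 3, 14] : List (Fin 24)).formPerm) * (([7, 17, 8, 16, 21, 23] : List (Fin 24)).formPerm) * (([9, 13] : List (Fin 24)).formPerm) * (([10, 12] : List (Fin 24)).formPerm)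
def c3 : Equiv.Perm (Fin 24) := (([0, 2, 14] : List (Fin 24)).formPerm) * (([1, 16, 13, 3, 6] : List (Fin 24)).formPerm) * (([7, 22, 9] : List (Fin 24)).formPerm) * (([8, 23, 10] : List (Fin 24)).formPerm) * (([11, 15, 12, 17] : List (Fin 24)).formPerm)
def c4 : Equiv.Perm (Fin 24) := (([0, 11, 14, 1, 23, 4, 16, 7, 12, 22, 5, 17, 3] : List (Fin 24)).formPerm) * (([2, 6] : List (Fin 24)).formPerm) * (([8, 21, 13, 15] : List (Fin 24)).formPerm)
def c5 : Equiv.Perm (Fin 24) := (([0, 16, 2, 11, 18, 6] : List (Fin 24)).formPerm) * (([1, 21, 19, 7, 20, 8, 13, 14, 9, 3, 10, 17, 4, 23, 5, 22, 15] : List (Fin 24)).formPerm)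
def c6 : Equiv.Perm (Fin 24) := (([0, 22, 23, 17, 16, 2, 3, 4, 12, 18, 9, 15, 1, 14, 5, 13, 7, 6] : List (Fin 24)).formPerm) * (([10, 21, 20, 11, 19] : List (Fin 24)).formPerm)
def c7 : Equiv.Perm (Fin 24) := (([0, 23, 13] : List (Fin 24)).formPerm) * (([1, 18, 17, 12, 6, 2, 3, 4, 20, 15, 11, 7] : List (Fin 24)).formPerm) * (([5, 19, 16, 10, 22, 14] : List (Fin 24)).formPerm) * (([8, 9, 21] : List (Fin 24)).formPerm)
def c8 : Equiv.Perm (Fin 24) := (([0, 21, 2, 15, 3, 16, 4, 7] : List (Fin 24)).formPerm) * (([1, 20, 14, 17, 19, 23, 18, 22, 8, 5, 6] : List (Fin 24)).formPerm) * (([9, 13] : List (Fin 24)).formPerm) * (([10, 12] : List (Fin 24)).formPerm)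
def c9 : Equiv.Perm (Fin 24) := (([0, 12, 16, 4, 1, 8, 5, 2, 13, 17, 7, 11, 15, 3, 14, 23, 6, 10, 20, 18, 21, 9, 19, 22] : List (Fin 24)).formPerm)
def c10 : Equiv.Perm (Fin 24) := (([0, 8, 15, 4] : List (Fin 24)).formPerm) * (([1, 2, 7, 16, 5] : List (Fin 24)).formPerm) * (([3, 6, 17, 11, 14, 21] : List (Fin 24)).formPerm) * (([9, 19, 12, 23, 10, 20, 18, 13, 22] : List (Fin 24)).formPerm)
def c11 : Equiv.Perm (Fin 24) := (([0, 1] : List (Fin 24)).formPerm) * (([3, 11, 8, 12, 23, 15] : List (Fin 24)).formPerm) * (([4, 10, 7, 13, 22, 16] : List (Fin 24)).formPerm) * (([5, 9, 6, 14, 21, 17] : List (Fin 24)).formPerm)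
set_option maxRecDepth 400000 in
lemma h2 : e2 * e1 = c2 := by decide
set_option maxRecDepth 400000 in
lemma h3 : e3 * c2 = c3 := by decide
set_option maxRecDepth 400000 in
lemma h4 : e4 * c3 = c4 := by decide
set_option maxRecDepth 400000 in
lemma h5 : e5 * c4 = c5 := by decide
set_option maxRecDepth 400000 in
lemma h6 : e6 * c5 = c6 := by decide
set_option maxRecDepth 400000 in
lemma h7 : e7 * c6 = c7 := by decide
set_option maxRecDepth 400000 in
lemma h8 : e8 * c7 = c8 := by decide
set_option maxRecDepth 400000 in
lemma h9 : e9 * c8 = c9 := by decide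
set_option maxRecDepth 400000 in
lemma h10 : e10 * c9 = c10 := by decide
set_option maxRecDepth 400000 in
lemma h11 : e11 * c10 = c11 := by decide
set_option maxRecDepth 400000 in
lemma h12 : e12 * c11 = Equiv.swap (0 : Fin 24) 1 := by decide

def L : List (Equiv.Perm (Fin 24)) := [e1, e2, e3, e4, e5, e6, e7, e8, e9, e10, e11, e12] ++ List.replicate 56 eE

set_option maxRecDepth 400000 in
lemma hE4 : eE ^ 4 = 1 := by decide

lemma hE56 : eE ^ 56 = 1 := by
  have h : (56 : ℕ) = 4 * 14 := rfl
  rw [h, pow_mul, hE4, one_pow]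

set_option maxRecDepth 400000 in
lemma memS : ∀ g ∈ L, g ∈ S := by
  intro g hg
  simp only [L, List.mem_append, List.mem_cons, List.not_mem_nil, or_false] at hg
  rcases hg with (rfl|rfl|rfl|rfl|rfl|rfl|rfl|rfl|rfl|rfl|rfl|rfl) | hg
  · exact ⟨1, 0, 5, 4, by decide, by decide, rfl⟩
  · exact ⟨1, 0, 0, 0, by decide, by decide, rfl⟩
  · exact ⟨0, 0, 1, 2, by decide, by decide, rfl⟩
  · exact ⟨1, 0, 3, 2, by decide, by decide, rfl⟩
  · exact ⟨4, 3, 1, 2, by decide, by decide, rfl⟩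
  · exact ⟨0, 5, 3, 3, by decide, by decide, rfl⟩
  · exact ⟨2, 3, 0, 5, by decide, by decide, rfl⟩
  · exact ⟨5, 4, 3, 2, by decide, by decide, rfl⟩
  · exact ⟨3, 3, 0, 1, by decide, by decide, rfl⟩
  · exact ⟨5, 0, 1, 2, by decide, by decide, rfl⟩
  · exact ⟨4, 4, 5, 0, by decide, by decide, rfl⟩
  · exact ⟨0, 0, 3, 3, by decide, by decide, rfl⟩
  · rw [List.eq_of_mem_replicate hg]
    exact ⟨0, 0, 0, 0, by decide, by decide, rfl⟩

lemma hrev : ([e1, e2, e3, e4, e5, e6, e7, e8, e9, e10, e11, e12] : List (Equiv.Perm (Fin 24))).reverse = [e12, e11, e10, e9, e8, e7, e6, e5, e4, e3, e2, e1] := by rfl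

lemma hprod : L.reverse.prod = Equiv.swap (0 : Fin 24) 1 := by
  show (([e1, e2, e3, e4, e5, e6, e7, e8, e9, e10, e11, e12] : List (Equiv.Perm (Fin 24))) ++ List.replicate 56 eE).reverse.prod = _
  rw [List.reverse_append, List.reverse_replicate, hrev, List.prod_append,
    List.prod_replicate, hE56, one_mul]
  simp only [List.prod_cons, List.prod_nil, mul_one]
  rw [h2, h3, h4, h5, h6, h7, h8, h9, h10, h11, h12]

lemma hlen : L.length = 68 := by rfl

/-- The transposition sequence F: a 68-step word in S realizing the swap (0 1). -/
theorem swap01_realizable :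
    (∃ l : List (Equiv.Perm (Fin 24)),
      (∀ g ∈ l, g ∈ S) ∧ l.length = 68 ∧ l.reverse.prod = Equiv.swap (0 : Fin 24) 1) ∧
    Equiv.swap (0 : Fin 24) 1 ∈ Submonoid.closure S := by
  constructor
  · exact ⟨L, memS, hlen, hprod⟩
  · rw [← hprod]
    exact Submonoid.list_prod_mem _ fun x hx =>
      Submonoid.subset_closure (memS x (List.mem_reverse.mp hx))

end Volleyball
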